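/- Let M = {x,y,z} with the symmetric function ρ given by ρ(x,y) = 1, ρ(y,z) = 2, ρ(z,x) = 5 and ρ vanishing on the diagonal (ρ violates the triangle inequality). Then the generalized minimal filling weight of (M,ρ) equals 4 while the minimal filling weight equals 5: the infimum of w(𝒢) over all generalized fillings 𝒢 of (M,ρ) whose type is a tree in which every vertex of degree 1 is boundary equals 4, and the infimum of w(𝒢) over all fillings (with nonnegative weights) equals 5. In particular the conclusion mf₋(M) = mf(M) can fail when ρ does not satisfy the triangle inequality. -/

import Mathlib

open scoped BigOperators

namespace MinFill

variable {V : Type*}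

/-- The total weight of a (generalized) weighted graph: the sum of the weights
of its edges. -/
noncomputable def graphWeight (G : SimpleGraph V) (w : Sym2 V → ℝ) : ℝ :=
  ∑ᶠ e ∈ G.edgeSet, w e

/-- The weight of a walk: the sum of the weights of its edges. -/
def walkWeight {G : SimpleGraph V} (w : Sym2 V → ℝ) {u v : V} (p : G.Walk u v) : ℝ :=
  (p.edges.map w).sum

/-- `dw G w u v` is the minimum over simple paths in `G` from `u` to `v` of the
sum of the weights of their edges. -/
noncomputable def dw (G : SimpleGraph V) (w : Sym2 V → ℝ) (u v : V) : ℝ :=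
  sInf {r : ℝ | ∃ p : G.Walk u v, p.IsPath ∧ walkWeight w p = r}

/-- The degree of a vertex: the number of edges incident to it. -/
noncomputable def deg (G : SimpleGraph V) (v : V) : ℕ :=
  (G.neighborSet v).ncard

/-- `ρ` is a pseudometric on the subset `M`: symmetric, nonnegative, vanishing
on the diagonal and satisfying the triangle inequality. -/
def IsPseudometricOn (M : Set V) (ρ : V → V → ℝ) : Prop :=
  (∀ p ∈ M, ∀ q ∈ M, ρ p q = ρ q p) ∧
  (∀ p ∈ M, ∀ q ∈ M, 0 ≤ ρ p q) ∧
  (∀ p ∈ M, ρ p p = 0) ∧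
  (∀ p ∈ M, ∀ q ∈ M, ∀ r ∈ M, ρ p r ≤ ρ p q + ρ q r)

/-- `(G, w)` is a generalized filling of `(M, ρ)` (with `M ⊆ V`): `G` is
connected (and joins `M`), and for all boundary points `p, q ∈ M` every simple
path in `G` from `p` to `q` has weight at least `ρ p q` (equivalently
`ρ p q ≤ d_w(p, q)`). -/
def IsGenFilling (G : SimpleGraph V) (w : Sym2 V → ℝ) (M : Set V) (ρ : V → V → ℝ) : Prop :=
  G.Connected ∧ ∀ p ∈ M, ∀ q ∈ M, ∀ γ : G.Walk p q, γ.IsPath → ρ p q ≤ walkWeight w γ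


/-- `ρ` is a pseudometric on the finite set `M`. -/
def IsPseudometric {M : Type*} (ρ : M → M → ℝ) : Prop :=
  (∀ p q, ρ p q = ρ q p) ∧ (∀ p q, 0 ≤ ρ p q) ∧ (∀ p, ρ p p = 0) ∧
    (∀ p q r, ρ p r ≤ ρ p q + ρ q r)

/-- `(G, w)` is a generalized filling of `(M, ρ)`, where the boundary `M` is
embedded into the vertex set via `ι`. -/
def IsGenFillingE {M V : Type*} (G : SimpleGraph V) (ι : M ↪ V) (w : Sym2 V → ℝ)
    (ρ : M → M → ℝ) : Prop :=
  G.Connected ∧ ∀ p q : M, ∀ γ : G.Walk (ι p) (ι q), γ.IsPath → ρ p q ≤ walkWeight w γ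

/-- The type `G` is a tree in which every vertex of degree 1 is boundary. -/
def GoodType {M V : Type*} (G : SimpleGraph V) (ι : M ↪ V) : Prop :=
  G.IsTree ∧ ∀ v : V, deg G v = 1 → v ∈ Set.range ι

/-- The generalized minimal filling weight `mf₋(M)`: the infimum of total
weight over all generalized fillings of `(M, ρ)` whose type is a tree in which
every vertex of degree 1 is boundary. -/
noncomputable def mfNeg (M : Type) [Fintype M] (ρ : M → M → ℝ) : ℝ :=
  sInf {r : ℝ | ∃ (V : Type) (_ : Fintype V) (G : SimpleGraph V) (ι : M ↪ V)
    (w : Sym2 V → ℝ),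
      IsGenFillingE G ι w ρ ∧ GoodType G ι ∧ r = graphWeight G w}

/-- The minimal filling weight `mf(M)`: the infimum of total weight over all
fillings of `(M, ρ)` (with nonnegative weight functions). -/
noncomputable def mf (M : Type) [Fintype M] (ρ : M → M → ℝ) : ℝ :=
  sInf {r : ℝ | ∃ (V : Type) (_ : Fintype V) (G : SimpleGraph V) (ι : M ↪ V)
    (w : Sym2 V → ℝ),
      IsGenFillingE G ι w ρ ∧ (∀ e ∈ G.edgeSet, 0 ≤ w e) ∧ r = graphWeight G w}

/-- The symmetric function of Example 3 on a three-point set, violating the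
triangle inequality: `ρ(x,y) = 1`, `ρ(y,z) = 2`, `ρ(z,x) = 5`. -/
noncomputable def exampleDist3 : Fin 3 → Fin 3 → ℝ := fun x y =>
  if x = y then 0
  else if (x = 0 ∧ y = 1) ∨ (x = 1 ∧ y = 0) then 1
  else if (x = 1 ∧ y = 2) ∨ (x = 2 ∧ y = 1) then 2
  else 5

section Aux
open SimpleGraph

lemma not_reachable_isolated {H : SimpleGraph V} {v w : V} (h : ∀ x, ¬ H.Adj v x)
    (hne : v ≠ w) : ¬ H.Reachable v w := by
  rintro ⟨p⟩
  cases p with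
  | nil => exact hne rfl
  | cons h' _ => exact h _ h'

/-- In a finite tree, on the far side of any edge there is a leaf. -/
lemma exists_leaf_far [Fintype V] {G : SimpleGraph V} (htree : G.IsTree) {u v : V}
    (he : G.Adj u v) :
    ∃ ℓ : V, deg G ℓ = 1 ∧ (G \ fromEdgeSet {s(u, v)}).Reachable ℓ v := by
  classical
  set G' := G \ fromEdgeSet {s(u, v)} with hG'
  have hbridge : ¬ G'.Reachable u v := by
    have := (isAcyclic_iff_forall_adj_isBridge.mp htree.IsAcyclic he)
    exact (isBridge_iff.mp this)
  have hex : ∀ t : V, ∃! p : G.Walk u t, p.IsPath := htree.existsUnique_path u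
  let pa : ∀ t : V, G.Walk u t := fun t => (hex t).choose
  have pa_path : ∀ t, (pa t).IsPath := fun t => (hex t).choose_spec.1
  have pa_uniq : ∀ t (q : G.Walk u t), q.IsPath → q = pa t := fun t q hq =>
    ((hex t).choose_spec.2 q hq)
  set B : Set V := {t | G'.Reachable t v} with hB
  have hvB : v ∈ B := Reachable.refl v
  obtain ⟨ℓ, hℓB, hmax⟩ := Set.Finite.exists_maximalFor (fun t => (pa t).length) B
    (Set.toFinite B) ⟨v, hvB⟩
  have huB : u ∉ B := fun h => hbridge h
  have hℓu : ℓ ≠ u := fun h => huB (h ▸ hℓB)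
  -- key: every neighbor of ℓ gives the same last edge of pa ℓ
  have key : ∀ c : V, G.Adj ℓ c → (pa ℓ).edges.getLast? = some s(c, ℓ) := by
    intro c hadj
    by_cases hce : s(ℓ, c) = s(u, v)
    · rcases Sym2.eq_iff.mp hce with ⟨h1, h2⟩ | ⟨h1, h2⟩
      · exact absurd h1 hℓu
      · have hP : (Walk.cons he Walk.nil : G.Walk u v).IsPath := by
          simp [Walk.cons_isPath_iff, he.ne]
        rw [h1, h2]
        rw [← pa_uniq v _ hP]
        simp
    · have hadj' : G'.Adj ℓ c := by
        rw [hG', sdiff_adj]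
        refine ⟨hadj, ?_⟩
        rw [fromEdgeSet_adj]
        rintro ⟨hmem, -⟩
        exact hce (by simpa using hmem)
      have hcB : c ∈ B := ((hadj'.symm).reachable).trans hℓB
      by_cases hsup : c ∈ (pa ℓ).support
      · -- c is on the path; show the dropUntil piece is the single edge
        have hcl : c ≠ ℓ := hadj.ne'
        have hD : ((pa ℓ).dropUntil c hsup).IsPath := (pa_path ℓ).dropUntil hsup
        have hsingle : (Walk.cons hadj.symm Walk.nil : G.Walk c ℓ).IsPath := by
          simp [Walk.cons_isPath_iff, hcl]
        have hDS : (pa ℓ).dropUntil c hsup = Walk.cons hadj.symm Walk.nil := by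
          have := htree.IsAcyclic.path_unique ⟨(pa ℓ).dropUntil c hsup, hD⟩
            ⟨Walk.cons hadj.symm Walk.nil, hsingle⟩
          exact congrArg Subtype.val this
        have hspec := (pa ℓ).take_spec hsup
        calc (pa ℓ).edges.getLast?
            = (((pa ℓ).takeUntil c hsup).append ((pa ℓ).dropUntil c hsup)).edges.getLast? := by
              rw [hspec]
          _ = some s(c, ℓ) := by
              rw [Walk.edges_append, hDS]
              simp [List.getLast?_concat]
      · -- extend the path: contradiction with maximality
        exfalso
        have hrevpath : ((pa ℓ).reverse).IsPath := (pa_path ℓ).reverse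
        have hQ : (Walk.cons hadj.symm (pa ℓ).reverse : G.Walk c u).IsPath := by
          rw [Walk.cons_isPath_iff]
          refine ⟨hrevpath, ?_⟩
          rw [Walk.support_reverse, List.mem_reverse]
          exact hsup
        have hQ' : ((Walk.cons hadj.symm (pa ℓ).reverse).reverse : G.Walk u c).IsPath :=
          hQ.reverse
        have hlen : ((Walk.cons hadj.symm (pa ℓ).reverse).reverse).length
            = (pa ℓ).length + 1 := by
          simp [Walk.length_reverse, Walk.length_cons]
        have := pa_uniq c _ hQ'
        have hlc : (pa c).length = (pa ℓ).length + 1 := by rw [← this, hlen]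
        have := hmax hcB (by dsimp only; omega)
        dsimp only at this
        omega
  -- ℓ has a neighbor
  have hnotnil : ¬ ((pa ℓ).reverse).Nil := Walk.not_nil_of_ne hℓu
  obtain ⟨c₀, hadj₀, q, -⟩ := Walk.not_nil_iff.mp hnotnil
  refine ⟨ℓ, ?_, hℓB⟩
  have hset : G.neighborSet ℓ = {c₀} := by
    ext t
    simp only [mem_neighborSet, Set.mem_singleton_iff]
    constructor
    · intro ht
      have h1 := key t ht
      have h2 := key c₀ hadj₀
      rw [h1] at h2
      exact Sym2.congr_left.mp (Option.some_injective _ h2)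
    · rintro rfl; exact hadj₀
  rw [deg, hset, Set.ncard_singleton]
lemma mem_path_iff_not_reachable [Fintype V] {G : SimpleGraph V} (htree : G.IsTree)
    {u v : V} (he : G.Adj u v) {p q : V} (P : G.Walk p q) (hP : P.IsPath) :
    s(u, v) ∈ P.edges ↔ ¬ (G \ fromEdgeSet {s(u, v)}).Reachable p q := by
  classical
  set G' := G \ fromEdgeSet {s(u, v)} with hG'
  constructor
  · intro hmem ⟨W'⟩
    set W : G.Walk p q := W'.map (Hom.ofLE sdiff_le) with hW
    have hWedges : W.edges = W'.edges := by
      rw [hW, Walk.edges_map]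
      have hid : Sym2.map ⇑(Hom.ofLE (sdiff_le : G' ≤ G)) = id := by
        funext e
        induction e using Sym2.ind with
        | _ a b => simp [Hom.ofLE_apply]
      rw [hid, List.map_id]
    have hPW : P = ↑W.toPath := by
      have := htree.IsAcyclic.path_unique ⟨P, hP⟩ W.toPath
      exact congrArg Subtype.val this
    have h1 : s(u, v) ∈ W.edges := by
      rw [hPW] at hmem
      exact W.edges_toPath_subset hmem
    rw [hWedges] at h1
    have h2 : s(u, v) ∈ G'.edgeSet := W'.edges_subset_edgeSet h1
    rw [hG', edgeSet_sdiff, edgeSet_fromEdgeSet] at h2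
    exact h2.2 ⟨rfl, fun hd => he.ne (Sym2.mk_isDiag_iff.mp hd)⟩
  · intro hnr
    by_contra hmem
    refine hnr ⟨P.transfer G' ?_⟩
    intro e' he'
    rw [hG', edgeSet_sdiff, edgeSet_fromEdgeSet]
    refine ⟨P.edges_subset_edgeSet he', ?_⟩
    simp only [Set.mem_diff, Set.mem_singleton_iff, Set.mem_setOf_eq]
    rintro ⟨rfl, -⟩
    exact hmem he'

lemma reach_dichotomy {G : SimpleGraph V} (hconn : G.Connected)
    {u v : V} (t : V) :
    (G \ fromEdgeSet {s(u, v)}).Reachable t u ∨ (G \ fromEdgeSet {s(u, v)}).Reachable t v := by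
  classical
  have step : ∀ {a b : V}, G.Adj a b →
      ((G \ fromEdgeSet {s(u, v)}).Reachable b u ∨ (G \ fromEdgeSet {s(u, v)}).Reachable b v) →
      ((G \ fromEdgeSet {s(u, v)}).Reachable a u ∨ (G \ fromEdgeSet {s(u, v)}).Reachable a v) := by
    intro a b hab hP
    by_cases hE : s(a, b) = s(u, v)
    · rcases Sym2.eq_iff.mp hE with ⟨rfl, rfl⟩ | ⟨rfl, rfl⟩
      · exact Or.inl (Reachable.refl _)
      · exact Or.inr (Reachable.refl _)
    · have hadj : (G \ fromEdgeSet {s(u, v)}).Adj a b := by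
        rw [sdiff_adj]
        exact ⟨hab, by rw [fromEdgeSet_adj]; rintro ⟨hm, -⟩; exact hE (by simpa using hm)⟩
      rcases hP with h | h
      · exact Or.inl (hadj.reachable.trans h)
      · exact Or.inr (hadj.reachable.trans h)
  have aux : ∀ {a b : V} (_ : G.Walk a b),
      ((G \ fromEdgeSet {s(u, v)}).Reachable b u ∨ (G \ fromEdgeSet {s(u, v)}).Reachable b v) →
      ((G \ fromEdgeSet {s(u, v)}).Reachable a u ∨ (G \ fromEdgeSet {s(u, v)}).Reachable a v) := by
    intro a b W
    induction W with
    | nil => exact id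
    | cons hab W ih => exact fun h => step hab (ih h)
  obtain ⟨W⟩ := hconn.preconnected t u
  exact aux W (Or.inl (Reachable.refl _))


lemma edge_two_of_three [Fintype V] {G : SimpleGraph V} (htree : G.IsTree) {x y z : V}
    (hleaf : ∀ t : V, deg G t = 1 → t = x ∨ t = y ∨ t = z)
    {Pxy : G.Walk x y} (h1 : Pxy.IsPath) {Pyz : G.Walk y z} (h2 : Pyz.IsPath)
    {Pxz : G.Walk x z} (h3 : Pxz.IsPath) {e : Sym2 V} (he : e ∈ G.edgeSet) :
    (e ∈ Pxy.edges ∧ e ∈ Pyz.edges ∧ e ∉ Pxz.edges) ∨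
      (e ∈ Pxy.edges ∧ e ∉ Pyz.edges ∧ e ∈ Pxz.edges) ∨
      (e ∉ Pxy.edges ∧ e ∈ Pyz.edges ∧ e ∈ Pxz.edges) := by
  classical
  induction e using Sym2.ind with
  | _ u v =>
  rw [SimpleGraph.mem_edgeSet] at he
  set G' := G \ fromEdgeSet {s(u, v)} with hG'
  have hbridge : ¬ G'.Reachable u v :=
    (isBridge_iff.mp (isAcyclic_iff_forall_adj_isBridge.mp htree.IsAcyclic he))
  have hr : ∀ p q : V, G'.Reachable p q ↔ (G'.Reachable p u ↔ G'.Reachable q u) := by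
    intro p q
    constructor
    · intro h
      constructor
      · intro hp; exact h.symm.trans hp
      · intro hq; exact h.trans hq
    · intro h
      by_cases hp : G'.Reachable p u
      · exact hp.trans (h.mp hp).symm
      · rcases reach_dichotomy htree.isConnected p with h' | h'
        · exact absurd h' hp
        · rcases reach_dichotomy htree.isConnected q with h'' | h''
          · exact absurd (h.mpr h'') hp
          · exact h'.trans h''.symm
  have exy : (s(u, v) ∈ Pxy.edges) ↔ ¬ (G'.Reachable x u ↔ G'.Reachable y u) := by
    rw [mem_path_iff_not_reachable htree he Pxy h1, ← hG', hr]
  have eyz : (s(u, v) ∈ Pyz.edges) ↔ ¬ (G'.Reachable y u ↔ G'.Reachable z u) := by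
    rw [mem_path_iff_not_reachable htree he Pyz h2, ← hG', hr]
  have exz : (s(u, v) ∈ Pxz.edges) ↔ ¬ (G'.Reachable x u ↔ G'.Reachable z u) := by
    rw [mem_path_iff_not_reachable htree he Pxz h3, ← hG', hr]
  have hnotall : ¬ (G'.Reachable x u ∧ G'.Reachable y u ∧ G'.Reachable z u) := by
    rintro ⟨hx, hy, hz⟩
    obtain ⟨ℓ, hdeg, hreach⟩ := exists_leaf_far htree he
    rw [← hG'] at hreach
    rcases hleaf ℓ hdeg with rfl | rfl | rfl
    · exact hbridge (hx.symm.trans hreach)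
    · exact hbridge (hy.symm.trans hreach)
    · exact hbridge (hz.symm.trans hreach)
  have hnotnone : ¬ (¬ G'.Reachable x u ∧ ¬ G'.Reachable y u ∧ ¬ G'.Reachable z u) := by
    rintro ⟨hx, hy, hz⟩
    obtain ⟨ℓ, hdeg, hreach⟩ := exists_leaf_far htree he.symm
    rw [Sym2.eq_swap, ← hG'] at hreach
    rcases hleaf ℓ hdeg with rfl | rfl | rfl
    · exact hx hreach
    · exact hy hreach
    · exact hz hreach
  rw [exy, eyz, exz]
  by_cases hx : G'.Reachable x u <;> by_cases hy : G'.Reachable y u <;>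
    by_cases hz : G'.Reachable z u
  · exact absurd ⟨hx, hy, hz⟩ hnotall
  · exact Or.inr (Or.inr ⟨not_not_intro (iff_of_true hx hy),
      fun h => hz (h.mp hy), fun h => hz (h.mp hx)⟩)
  · exact Or.inl ⟨fun h => hy (h.mp hx), fun h => hy (h.mpr hz),
      not_not_intro (iff_of_true hx hz)⟩
  · exact Or.inr (Or.inl ⟨fun h => hy (h.mp hx), not_not_intro (iff_of_false hy hz),
      fun h => hz (h.mp hx)⟩)
  · exact Or.inr (Or.inl ⟨fun h => hx (h.mpr hy), not_not_intro (iff_of_true hy hz),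
      fun h => hx (h.mpr hz)⟩)
  · exact Or.inl ⟨fun h => hx (h.mpr hy), fun h => hz (h.mp hy),
      not_not_intro (iff_of_false hx hz)⟩
  · exact Or.inr (Or.inr ⟨not_not_intro (iff_of_false hx hy),
      fun h => hy (h.mpr hz), fun h => hx (h.mpr hz)⟩)
  · exact absurd ⟨hx, hy, hz⟩ hnotnone


lemma graphWeight_eq_sum (G : SimpleGraph V) (w : Sym2 V → ℝ) (hfin : G.edgeSet.Finite) :
    graphWeight G w = ∑ e ∈ hfin.toFinset, w e :=
  finsum_mem_eq_finite_toFinset_sum _ _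

lemma walkWeight_eq_sum [DecidableEq V] {G : SimpleGraph V} (w : Sym2 V → ℝ) {u v : V}
    {p : G.Walk u v} (hp : p.IsPath) (hfin : G.edgeSet.Finite) :
    walkWeight w p = ∑ e ∈ hfin.toFinset, if e ∈ p.edges then w e else 0 := by
  classical
  have hfilter : hfin.toFinset.filter (· ∈ p.edges) = p.edges.toFinset := by
    ext e
    simp only [Finset.mem_filter, Set.Finite.mem_toFinset, List.mem_toFinset]
    exact ⟨fun h => h.2, fun h => ⟨p.edges_subset_edgeSet h, h⟩⟩
  rw [← Finset.sum_filter, hfilter, List.sum_toFinset w hp.edges_nodup]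
  rfl

lemma three_paths_weight [Fintype V] {G : SimpleGraph V} (htree : G.IsTree) {x y z : V}
    (hleaf : ∀ t : V, deg G t = 1 → t = x ∨ t = y ∨ t = z) (w : Sym2 V → ℝ)
    {Pxy : G.Walk x y} (h1 : Pxy.IsPath) {Pyz : G.Walk y z} (h2 : Pyz.IsPath)
    {Pxz : G.Walk x z} (h3 : Pxz.IsPath) :
    walkWeight w Pxy + walkWeight w Pyz + walkWeight w Pxz = 2 * graphWeight G w := by
  classical
  have hfin : G.edgeSet.Finite := Set.toFinite _
  rw [walkWeight_eq_sum w h1 hfin, walkWeight_eq_sum w h2 hfin, walkWeight_eq_sum w h3 hfin,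
    graphWeight_eq_sum G w hfin, Finset.mul_sum, ← Finset.sum_add_distrib,
    ← Finset.sum_add_distrib]
  refine Finset.sum_congr rfl ?_
  intro e hemem
  have he : e ∈ G.edgeSet := hfin.mem_toFinset.mp hemem
  rcases edge_two_of_three htree hleaf h1 h2 h3 he with ⟨a, b, c⟩ | ⟨a, b, c⟩ | ⟨a, b, c⟩ <;>
    simp [a, b, c] <;> ring


/-! ### Explicit constructions -/

def star4 : SimpleGraph (Fin 4) := SimpleGraph.fromRel (fun _ b => b = 3)

lemma star4_adj {a b : Fin 4} : star4.Adj a b ↔ a ≠ b ∧ (b = 3 ∨ a = 3) := by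
  simp [star4, fromRel_adj]

lemma star4_connected : star4.Connected := by
  rw [connected_iff]
  refine ⟨?_, ⟨3⟩⟩
  have hto3 : ∀ t : Fin 4, star4.Reachable t 3 := by
    intro t
    by_cases h : t = 3
    · subst h; exact Reachable.refl _
    · exact (star4_adj.mpr ⟨h, Or.inl rfl⟩).reachable
  exact fun u v => (hto3 u).trans (hto3 v).symm

lemma star4_isolated {i : Fin 4} (hi : i ≠ 3) :
    ∀ x, ¬(star4 \ fromEdgeSet {s(i, 3)}).Adj i x := by
  intro x
  rw [sdiff_adj, fromEdgeSet_adj]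
  rintro ⟨hadj, hn⟩
  rcases star4_adj.mp hadj with ⟨hne, h3 | h3⟩
  · exact hn ⟨by simp [h3], hne⟩
  · exact hi h3

lemma star4_acyclic : star4.IsAcyclic := by
  rw [isAcyclic_iff_forall_adj_isBridge]
  intro a b hab
  rw [isBridge_iff]
  rcases star4_adj.mp hab with ⟨hne, rfl | h3⟩
  · exact not_reachable_isolated (star4_isolated hne) hne
  · subst h3
    intro hr
    rw [show s((3 : Fin 4), b) = s(b, 3) from Sym2.eq_swap] at hr
    exact not_reachable_isolated (star4_isolated (Ne.symm hne)) (Ne.symm hne) hr.symm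

lemma star4_isTree : star4.IsTree := ⟨star4_connected, star4_acyclic⟩

lemma star4_edgeSet :
    star4.edgeSet = {s((0 : Fin 4), 3), s(1, 3), s(2, 3)} := by
  rw [Set.ext_iff, Sym2.forall]
  intro a b
  simp only [mem_edgeSet, star4_adj, Set.mem_insert_iff, Set.mem_singleton_iff, Sym2.eq_iff]
  revert a b
  decide

noncomputable def wstar : Sym2 (Fin 4) → ℝ := fun e =>
  if e = s(0, 3) then 2 else if e = s(1, 3) then -1 else if e = s(2, 3) then 3 else 0

lemma wstar03 : wstar s(0, 3) = 2 := by simp [wstar]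
lemma wstar13 : wstar s(1, 3) = -1 := by rw [wstar]; rw [if_neg (by decide), if_pos rfl]
lemma wstar23 : wstar s(2, 3) = 3 := by rw [wstar]; rw [if_neg (by decide), if_neg (by decide), if_pos rfl]

lemma star4_graphWeight : graphWeight star4 wstar = 4 := by
  have h1 : star4.edgeSet = ↑({s((0 : Fin 4), 3), s(1, 3), s(2, 3)} : Finset (Sym2 (Fin 4))) := by
    rw [star4_edgeSet]; simp
  rw [graphWeight, h1, finsum_mem_coe_finset]
  rw [show ({s((0 : Fin 4), 3), s(1, 3), s(2, 3)} : Finset (Sym2 (Fin 4)))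
    = insert s((0 : Fin 4), 3) (insert s(1, 3) {s(2, 3)}) from rfl]
  rw [Finset.sum_insert (by decide), Finset.sum_insert (by decide), Finset.sum_singleton]
  rw [wstar03, wstar13, wstar23]
  norm_num

end Aux

section Aux2
open SimpleGraph

lemma ex_self (i : Fin 3) : exampleDist3 i i = 0 := by rw [exampleDist3]; rw [if_pos rfl]
lemma ex01 : exampleDist3 0 1 = 1 := by
  rw [exampleDist3]; rw [if_neg (by decide), if_pos (by decide)]
lemma ex10 : exampleDist3 1 0 = 1 := by
  rw [exampleDist3]; rw [if_neg (by decide), if_pos (by decide)]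
lemma ex12 : exampleDist3 1 2 = 2 := by
  rw [exampleDist3]; rw [if_neg (by decide), if_neg (by decide), if_pos (by decide)]
lemma ex21 : exampleDist3 2 1 = 2 := by
  rw [exampleDist3]; rw [if_neg (by decide), if_neg (by decide), if_pos (by decide)]
lemma ex02 : exampleDist3 0 2 = 5 := by
  rw [exampleDist3]; rw [if_neg (by decide), if_neg (by decide), if_neg (by decide)]
lemma ex20 : exampleDist3 2 0 = 5 := by
  rw [exampleDist3]; rw [if_neg (by decide), if_neg (by decide), if_neg (by decide)]

def iota4 : Fin 3 ↪ Fin 4 := ⟨Fin.castSucc, Fin.castSucc_injective 3⟩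

lemma star4_deg3 : deg star4 3 = 3 := by
  have h : star4.neighborSet 3 = {0, 1, 2} := by
    ext x
    simp only [mem_neighborSet, star4_adj, Set.mem_insert_iff, Set.mem_singleton_iff]
    revert x; decide
  rw [deg, h]
  rw [Set.ncard_insert_of_notMem (by decide) (Set.toFinite _),
    Set.ncard_insert_of_notMem (by decide) (Set.toFinite _), Set.ncard_singleton]

lemma star4_goodType : GoodType star4 iota4 := by
  refine ⟨star4_isTree, ?_⟩
  intro v hdeg
  fin_cases v
  · exact ⟨0, rfl⟩
  · exact ⟨1, rfl⟩
  · exact ⟨2, rfl⟩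
  · exact absurd (star4_deg3.symm.trans hdeg) (by norm_num)

lemma h03 : star4.Adj 0 3 := star4_adj.mpr (by decide)
lemma h13 : star4.Adj 1 3 := star4_adj.mpr (by decide)
lemma h23 : star4.Adj 2 3 := star4_adj.mpr (by decide)

lemma star4_filling : IsGenFillingE star4 iota4 wstar exampleDist3 := by
  refine ⟨star4_connected, ?_⟩
  have uniq : ∀ {a b : Fin 4} (γ W : star4.Walk a b), γ.IsPath → W.IsPath → γ = W := by
    intro a b γ W hγ hW
    exact congrArg Subtype.val (star4_acyclic.path_unique ⟨γ, hγ⟩ ⟨W, hW⟩)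
  intro p q γ hγ
  fin_cases p <;> fin_cases q
  · rw [uniq γ Walk.nil hγ (by simp), ex_self]; simp [walkWeight]
  · show exampleDist3 0 1 ≤ walkWeight wstar γ
    rw [uniq γ (Walk.cons h03 (Walk.cons h13.symm Walk.nil)) hγ
      (Walk.IsPath.mk' (by decide)), ex01]
    unfold walkWeight
    erw [Walk.edges_cons, Walk.edges_cons, Walk.edges_nil]
    simp only [walkWeight, Walk.edges_cons, Walk.edges_nil, List.map_cons, List.map_nil,
      List.sum_cons, List.sum_nil]
    rw [show s((3 : Fin 4), 1) = s(1, 3) from Sym2.eq_swap]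
    show (1 : ℝ) ≤ wstar s(0, 3) + (wstar s(1, 3) + 0)
    rw [wstar03, wstar13]
    norm_num
  · show exampleDist3 0 2 ≤ walkWeight wstar γ
    rw [uniq γ (Walk.cons h03 (Walk.cons h23.symm Walk.nil)) hγ
      (Walk.IsPath.mk' (by decide)), ex02]
    unfold walkWeight
    erw [Walk.edges_cons, Walk.edges_cons, Walk.edges_nil]
    simp only [walkWeight, Walk.edges_cons, Walk.edges_nil, List.map_cons, List.map_nil,
      List.sum_cons, List.sum_nil]
    rw [show s((3 : Fin 4), 2) = s(2, 3) from Sym2.eq_swap]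
    show (5 : ℝ) ≤ wstar s(0, 3) + (wstar s(2, 3) + 0)
    rw [wstar03, wstar23]
    norm_num
  · show exampleDist3 1 0 ≤ walkWeight wstar γ
    rw [uniq γ (Walk.cons h13 (Walk.cons h03.symm Walk.nil)) hγ
      (Walk.IsPath.mk' (by decide)), ex10]
    unfold walkWeight
    erw [Walk.edges_cons, Walk.edges_cons, Walk.edges_nil]
    simp only [walkWeight, Walk.edges_cons, Walk.edges_nil, List.map_cons, List.map_nil,
      List.sum_cons, List.sum_nil]
    rw [show s((3 : Fin 4), 0) = s(0, 3) from Sym2.eq_swap]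
    show (1 : ℝ) ≤ wstar s(1, 3) + (wstar s(0, 3) + 0)
    rw [wstar13, wstar03]
    norm_num
  · rw [uniq γ Walk.nil hγ (by simp), ex_self]; simp [walkWeight]
  · show exampleDist3 1 2 ≤ walkWeight wstar γ
    rw [uniq γ (Walk.cons h13 (Walk.cons h23.symm Walk.nil)) hγ
      (Walk.IsPath.mk' (by decide)), ex12]
    unfold walkWeight
    erw [Walk.edges_cons, Walk.edges_cons, Walk.edges_nil]
    simp only [walkWeight, Walk.edges_cons, Walk.edges_nil, List.map_cons, List.map_nil,
      List.sum_cons, List.sum_nil]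
    rw [show s((3 : Fin 4), 2) = s(2, 3) from Sym2.eq_swap]
    show (2 : ℝ) ≤ wstar s(1, 3) + (wstar s(2, 3) + 0)
    rw [wstar13, wstar23]
    norm_num
  · show exampleDist3 2 0 ≤ walkWeight wstar γ
    rw [uniq γ (Walk.cons h23 (Walk.cons h03.symm Walk.nil)) hγ
      (Walk.IsPath.mk' (by decide)), ex20]
    unfold walkWeight
    erw [Walk.edges_cons, Walk.edges_cons, Walk.edges_nil]
    simp only [walkWeight, Walk.edges_cons, Walk.edges_nil, List.map_cons, List.map_nil,
      List.sum_cons, List.sum_nil]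
    rw [show s((3 : Fin 4), 0) = s(0, 3) from Sym2.eq_swap]
    show (5 : ℝ) ≤ wstar s(2, 3) + (wstar s(0, 3) + 0)
    rw [wstar23, wstar03]
    norm_num
  · show exampleDist3 2 1 ≤ walkWeight wstar γ
    rw [uniq γ (Walk.cons h23 (Walk.cons h13.symm Walk.nil)) hγ
      (Walk.IsPath.mk' (by decide)), ex21]
    unfold walkWeight
    erw [Walk.edges_cons, Walk.edges_cons, Walk.edges_nil]
    simp only [walkWeight, Walk.edges_cons, Walk.edges_nil, List.map_cons, List.map_nil,
      List.sum_cons, List.sum_nil]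
    rw [show s((3 : Fin 4), 1) = s(1, 3) from Sym2.eq_swap]
    show (2 : ℝ) ≤ wstar s(2, 3) + (wstar s(1, 3) + 0)
    rw [wstar23, wstar13]
    norm_num
  · rw [uniq γ Walk.nil hγ (by simp), ex_self]; simp [walkWeight]

def path3 : SimpleGraph (Fin 3) :=
  fromRel (fun a b => (a = 0 ∧ b = 1) ∨ (a = 1 ∧ b = 2))

lemma path3_adj {a b : Fin 3} : path3.Adj a b ↔
    a ≠ b ∧ (((a = 0 ∧ b = 1) ∨ (a = 1 ∧ b = 2)) ∨ ((b = 0 ∧ a = 1) ∨ (b = 1 ∧ a = 2))) := by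
  simp [path3, fromRel_adj]

lemma p01 : path3.Adj 0 1 := path3_adj.mpr (by decide)
lemma p12 : path3.Adj 1 2 := path3_adj.mpr (by decide)

lemma path3_connected : path3.Connected := by
  rw [connected_iff]
  refine ⟨?_, ⟨1⟩⟩
  have hto1 : ∀ t : Fin 3, path3.Reachable t 1 := by
    intro t
    fin_cases t
    · exact p01.reachable
    · exact Reachable.refl _
    · exact p12.symm.reachable
  exact fun u v => (hto1 u).trans (hto1 v).symm

lemma path3_isolated0 : ∀ x, ¬(path3 \ fromEdgeSet {s(0, 1)}).Adj 0 x := by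
  intro x
  rw [sdiff_adj, fromEdgeSet_adj]
  rintro ⟨hadj, hn⟩
  rcases path3_adj.mp hadj with ⟨hne, (⟨-, h1⟩ | ⟨h0, -⟩) | (⟨-, h1⟩ | ⟨h1, -⟩)⟩
  · exact hn ⟨by simp [h1], hne⟩
  · exact absurd h0 (by decide)
  · exact absurd h1 (by decide)
  · exact hn ⟨by simp [h1], hne⟩

lemma path3_isolated2 : ∀ x, ¬(path3 \ fromEdgeSet {s(2, 1)}).Adj 2 x := by
  intro x
  rw [sdiff_adj, fromEdgeSet_adj]
  rintro ⟨hadj, hn⟩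
  rcases path3_adj.mp hadj with ⟨hne, (⟨h0, -⟩ | ⟨h1, -⟩) | (⟨-, h1⟩ | ⟨h1, -⟩)⟩
  · exact absurd h0 (by decide)
  · exact absurd h1 (by decide)
  · exact absurd h1 (by decide)
  · exact hn ⟨by simp [h1], hne⟩

lemma path3_acyclic : path3.IsAcyclic := by
  rw [isAcyclic_iff_forall_adj_isBridge]
  intro a b hab
  rw [isBridge_iff]
  rcases path3_adj.mp hab with ⟨hne, (⟨rfl, rfl⟩ | ⟨rfl, rfl⟩) | (⟨rfl, rfl⟩ | ⟨rfl, rfl⟩)⟩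
  · exact not_reachable_isolated path3_isolated0 (by decide)
  · intro hr
    rw [show s((1 : Fin 3), 2) = s(2, 1) from Sym2.eq_swap] at hr
    exact not_reachable_isolated path3_isolated2 (by decide) hr.symm
  · intro hr
    rw [show s((1 : Fin 3), 0) = s(0, 1) from Sym2.eq_swap] at hr
    exact not_reachable_isolated path3_isolated0 (by decide) hr.symm
  · exact not_reachable_isolated path3_isolated2 (by decide)

lemma path3_edgeSet : path3.edgeSet = {s((0 : Fin 3), 1), s(1, 2)} := by
  rw [Set.ext_iff, Sym2.forall]
  intro a b
  simp only [mem_edgeSet, path3_adj, Set.mem_insert_iff, Set.mem_singleton_iff, Sym2.eq_iff]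
  revert a b
  decide

noncomputable def wpath : Sym2 (Fin 3) → ℝ := fun e =>
  if e = s(0, 1) then 3 else if e = s(1, 2) then 2 else 0

lemma wp01 : wpath s(0, 1) = 3 := by rw [wpath]; rw [if_pos rfl]
lemma wp12 : wpath s(1, 2) = 2 := by rw [wpath]; rw [if_neg (by decide), if_pos rfl]

lemma wpath_nonneg : ∀ e, (0 : ℝ) ≤ wpath e := by
  intro e
  rw [wpath]
  split_ifs <;> norm_num

lemma path3_graphWeight : graphWeight path3 wpath = 5 := by
  have h1 : path3.edgeSet = ↑({s((0 : Fin 3), 1), s(1, 2)} : Finset (Sym2 (Fin 3))) := by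
    rw [path3_edgeSet]; simp
  rw [graphWeight, h1, finsum_mem_coe_finset]
  rw [show ({s((0 : Fin 3), 1), s(1, 2)} : Finset (Sym2 (Fin 3)))
    = insert s((0 : Fin 3), 1) {s(1, 2)} from rfl]
  rw [Finset.sum_insert (by decide), Finset.sum_singleton, wp01, wp12]
  norm_num

lemma path3_filling : IsGenFillingE path3 (Function.Embedding.refl (Fin 3)) wpath exampleDist3 := by
  refine ⟨path3_connected, ?_⟩
  have uniq : ∀ {a b : Fin 3} (γ W : path3.Walk a b), γ.IsPath → W.IsPath → γ = W := by
    intro a b γ W hγ hW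
    exact congrArg Subtype.val (path3_acyclic.path_unique ⟨γ, hγ⟩ ⟨W, hW⟩)
  intro p q γ hγ
  fin_cases p <;> fin_cases q
  · rw [uniq γ Walk.nil hγ (by simp), ex_self]; simp [walkWeight]
  · show exampleDist3 0 1 ≤ walkWeight wpath γ
    rw [uniq γ (Walk.cons p01 Walk.nil) hγ (Walk.IsPath.mk' (by decide)), ex01]
    show (1 : ℝ) ≤ wpath s(0, 1) + 0
    rw [wp01]; norm_num
  · show exampleDist3 0 2 ≤ walkWeight wpath γ
    rw [uniq γ (Walk.cons p01 (Walk.cons p12 Walk.nil)) hγ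
      (Walk.IsPath.mk' (by decide)), ex02]
    show (5 : ℝ) ≤ wpath s(0, 1) + (wpath s(1, 2) + 0)
    rw [wp01, wp12]; norm_num
  · show exampleDist3 1 0 ≤ walkWeight wpath γ
    rw [uniq γ (Walk.cons p01.symm Walk.nil) hγ (Walk.IsPath.mk' (by decide)), ex10]
    show (1 : ℝ) ≤ wpath s(1, 0) + 0
    rw [show s((1 : Fin 3), 0) = s(0, 1) from Sym2.eq_swap, wp01]; norm_num
  · rw [uniq γ Walk.nil hγ (by simp), ex_self]; simp [walkWeight]
  · show exampleDist3 1 2 ≤ walkWeight wpath γ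
    rw [uniq γ (Walk.cons p12 Walk.nil) hγ (Walk.IsPath.mk' (by decide)), ex12]
    show (2 : ℝ) ≤ wpath s(1, 2) + 0
    rw [wp12]; norm_num
  · show exampleDist3 2 0 ≤ walkWeight wpath γ
    rw [uniq γ (Walk.cons p12.symm (Walk.cons p01.symm Walk.nil)) hγ
      (Walk.IsPath.mk' (by decide)), ex20]
    show (5 : ℝ) ≤ wpath s(2, 1) + (wpath s(1, 0) + 0)
    rw [show s((2 : Fin 3), 1) = s(1, 2) from Sym2.eq_swap,
      show s((1 : Fin 3), 0) = s(0, 1) from Sym2.eq_swap, wp01, wp12]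
    norm_num
  · show exampleDist3 2 1 ≤ walkWeight wpath γ
    rw [uniq γ (Walk.cons p12.symm Walk.nil) hγ (Walk.IsPath.mk' (by decide)), ex21]
    show (2 : ℝ) ≤ wpath s(2, 1) + 0
    rw [show s((2 : Fin 3), 1) = s(1, 2) from Sym2.eq_swap, wp12]; norm_num
  · rw [uniq γ Walk.nil hγ (by simp), ex_self]; simp [walkWeight]

end Aux2

/-- For the three-point space of Example 3 (where the
triangle inequality fails), the generalized minimal filling weight is `4`
while the minimal filling weight is `5`; in particular `mf₋(M) = mf(M)` can
fail without the triangle inequality. -/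
theorem example_mfNeg_ne_mf :
    mfNeg (Fin 3) exampleDist3 = 4 ∧ mf (Fin 3) exampleDist3 = 5 := by
  constructor
  · -- mfNeg = 4
    have hmem : (4 : ℝ) ∈ {r : ℝ | ∃ (V : Type) (_ : Fintype V) (G : SimpleGraph V)
        (ι : Fin 3 ↪ V) (w : Sym2 V → ℝ),
        IsGenFillingE G ι w exampleDist3 ∧ GoodType G ι ∧ r = graphWeight G w} :=
      ⟨Fin 4, inferInstance, star4, iota4, wstar, star4_filling, star4_goodType,
        star4_graphWeight.symm⟩
    have hlb : ∀ r ∈ {r : ℝ | ∃ (V : Type) (_ : Fintype V) (G : SimpleGraph V)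
        (ι : Fin 3 ↪ V) (w : Sym2 V → ℝ),
        IsGenFillingE G ι w exampleDist3 ∧ GoodType G ι ∧ r = graphWeight G w}, (4 : ℝ) ≤ r := by
      rintro r ⟨V, hV, G, ι, w, ⟨hconn, hfill⟩, ⟨htree, hgood⟩, rfl⟩
      classical
      have hleaf : ∀ t : V, deg G t = 1 → t = ι 0 ∨ t = ι 1 ∨ t = ι 2 := by
        intro t ht
        obtain ⟨i, rfl⟩ := hgood t ht
        fin_cases i
        · exact Or.inl rfl
        · exact Or.inr (Or.inl rfl)
        · exact Or.inr (Or.inr rfl)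
      obtain ⟨Pxy, hPxy, -⟩ := htree.existsUnique_path (ι 0) (ι 1)
      obtain ⟨Pyz, hPyz, -⟩ := htree.existsUnique_path (ι 1) (ι 2)
      obtain ⟨Pxz, hPxz, -⟩ := htree.existsUnique_path (ι 0) (ι 2)
      have h1 : (1 : ℝ) ≤ walkWeight w Pxy := ex01 ▸ hfill 0 1 Pxy hPxy
      have h2 : (2 : ℝ) ≤ walkWeight w Pyz := ex12 ▸ hfill 1 2 Pyz hPyz
      have h3 : (5 : ℝ) ≤ walkWeight w Pxz := ex02 ▸ hfill 0 2 Pxz hPxz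
      have hsum := three_paths_weight htree hleaf w hPxy hPyz hPxz
      linarith
    exact le_antisymm (csInf_le ⟨4, hlb⟩ hmem) (le_csInf ⟨4, hmem⟩ hlb)
  · -- mf = 5
    have hmem : (5 : ℝ) ∈ {r : ℝ | ∃ (V : Type) (_ : Fintype V) (G : SimpleGraph V)
        (ι : Fin 3 ↪ V) (w : Sym2 V → ℝ),
        IsGenFillingE G ι w exampleDist3 ∧ (∀ e ∈ G.edgeSet, 0 ≤ w e) ∧ r = graphWeight G w} :=
      ⟨Fin 3, inferInstance, path3, Function.Embedding.refl _, wpath, path3_filling,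
        fun e _ => wpath_nonneg e, path3_graphWeight.symm⟩
    have hlb : ∀ r ∈ {r : ℝ | ∃ (V : Type) (_ : Fintype V) (G : SimpleGraph V)
        (ι : Fin 3 ↪ V) (w : Sym2 V → ℝ),
        IsGenFillingE G ι w exampleDist3 ∧ (∀ e ∈ G.edgeSet, 0 ≤ w e) ∧ r = graphWeight G w},
        (5 : ℝ) ≤ r := by
      rintro r ⟨V, hV, G, ι, w, ⟨hconn, hfill⟩, hw, rfl⟩
      classical
      obtain ⟨W⟩ := hconn.preconnected (ι 0) (ι 2)
      have h5 : (5 : ℝ) ≤ walkWeight w (W.toPath : G.Walk (ι 0) (ι 2)) :=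
        ex02 ▸ hfill 0 2 _ W.toPath.2
      have hfin : G.edgeSet.Finite := Set.toFinite _
      rw [graphWeight_eq_sum G w hfin]
      rw [walkWeight_eq_sum w W.toPath.2 hfin] at h5
      refine le_trans h5 (Finset.sum_le_sum ?_)
      intro e he
      split_ifs
      · exact le_refl _
      · exact hw e (hfin.mem_toFinset.mp he)
    exact le_antisymm (csInf_le ⟨5, hlb⟩ hmem) (le_csInf ⟨5, hmem⟩ hlb)

end MinFill
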